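/- arXiv:quant-ph/0612013 — 8 statements merged into one kernel-verified Lean document; each statement's English description precedes it below -/
import Mathlib

section
/- Every 2-dimensional subspace of ℂ² ⊗ ℂ² contains a nonzero product vector (a vector of the form a ⊗ b). -/
/-- The elementary tensor `a ⊗ b` of two Euclidean-space vectors, realised in
`EuclideanSpace ℂ (ι × κ)` (which carries the induced tensor inner product). -/
noncomputable def tens {ι κ : Type*} [Fintype ι] [Fintype κ]
    (a : EuclideanSpace ℂ ι) (b : EuclideanSpace ℂ κ) :
    EuclideanSpace ℂ (ι × κ) :=
  WithLp.toLp 2 (fun p : ι × κ => a p.1 * b p.2)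

/-- The standard basis vector `eᵢ` of `ℂ²`. -/
noncomputable def e (i : Fin 2) : EuclideanSpace ℂ (Fin 2) := EuclideanSpace.single i 1

lemma prod_of_det (w : EuclideanSpace ℂ (Fin 2 × Fin 2))
    (h : w (0,0) * w (1,1) = w (0,1) * w (1,0)) :
    ∃ a b : EuclideanSpace ℂ (Fin 2), tens a b = w := by
  by_cases h0 : w (0,0) = 0
  · by_cases h1 : w (0,1) = 0
    · refine ⟨WithLp.toLp 2 (![0,1] : Fin 2 → ℂ), WithLp.toLp 2 (![w (1,0), w (1,1)] : Fin 2 → ℂ), ?_⟩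
      ext q
      obtain ⟨i, j⟩ := q
      fin_cases i <;> fin_cases j <;>
        simp only [tens, PiLp.toLp_apply, Matrix.cons_val_zero, Matrix.cons_val_one, Matrix.head_cons,
          Fin.zero_eta, Fin.mk_one, one_mul, mul_one, zero_mul, mul_zero]
      · exact h0.symm
      · exact h1.symm
    · have h10 : w (1,0) = 0 := by
        rcases mul_eq_zero.mp (h ▸ (by rw [h0, zero_mul] : w (0,0) * w (1,1) = 0)) with hh | hh
        · exact absurd hh h1
        · exact hh
      refine ⟨WithLp.toLp 2 (![w (0,1), w (1,1)] : Fin 2 → ℂ), WithLp.toLp 2 (![0,1] : Fin 2 → ℂ), ?_⟩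
      ext q
      obtain ⟨i, j⟩ := q
      fin_cases i <;> fin_cases j <;>
        simp only [tens, PiLp.toLp_apply, Matrix.cons_val_zero, Matrix.cons_val_one, Matrix.head_cons,
          Fin.zero_eta, Fin.mk_one, one_mul, mul_one, zero_mul, mul_zero]
      · exact h0.symm
      · exact h10.symm
  · refine ⟨WithLp.toLp 2 (![w (0,0), w (1,0)] : Fin 2 → ℂ), WithLp.toLp 2 (![1, w (0,1) / w (0,0)] : Fin 2 → ℂ), ?_⟩
    ext q
    obtain ⟨i, j⟩ := q
    fin_cases i <;> fin_cases j <;>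
      simp only [tens, PiLp.toLp_apply, Matrix.cons_val_zero, Matrix.cons_val_one, Matrix.head_cons,
        Fin.zero_eta, Fin.mk_one, one_mul, mul_one, zero_mul, mul_zero]
    · rw [mul_div_assoc']
      exact mul_div_cancel_left₀ _ h0
    · rw [mul_div_assoc', mul_comm, ← h]
      exact mul_div_cancel_left₀ _ h0

theorem stmt_4 (p : Submodule ℂ (EuclideanSpace ℂ (Fin 2 × Fin 2)))
    (hp : Module.finrank ℂ p = 2) :
    ∃ (a b : EuclideanSpace ℂ (Fin 2)), tens a b ≠ 0 ∧ tens a b ∈ p := by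
  classical
  have : FiniteDimensional ℂ p := inferInstance
  let B := (Module.finBasis ℂ p).reindex (finCongr hp)
  set u : EuclideanSpace ℂ (Fin 2 × Fin 2) := ((B 0 : ↥p) : EuclideanSpace ℂ (Fin 2 × Fin 2)) with hu
  set v : EuclideanSpace ℂ (Fin 2 × Fin 2) := ((B 1 : ↥p) : EuclideanSpace ℂ (Fin 2 × Fin 2)) with hv
  have hup : u ∈ p := (B 0).2
  have hvp : v ∈ p := (B 1).2
  have hli : LinearIndependent ℂ (fun i => ((B i : p) : EuclideanSpace ℂ (Fin 2 × Fin 2))) :=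
    B.linearIndependent.map' p.subtype p.ker_subtype
  have hcoef := Fintype.linearIndependent_iff.mp hli
  have hune : u ≠ 0 := by
    intro h
    have := hcoef ![1, 0] (by
      simp [Fin.sum_univ_two, ← hu, ← hv, h]) 0
    simp at this
  have hkey : ∀ s : ℂ, s • u + v ≠ 0 := by
    intro s h
    have := hcoef ![s, 1] (by
      simp [Fin.sum_univ_two, ← hu, ← hv]
      exact h) 1
    simp at this
  -- the quadratic
  set A : ℂ := u (0,0) * u (1,1) - u (0,1) * u (1,0) with hA
  set Bq : ℂ := u (0,0) * v (1,1) + v (0,0) * u (1,1) - u (0,1) * v (1,0) - v (0,1) * u (1,0) with hBq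
  set Cq : ℂ := v (0,0) * v (1,1) - v (0,1) * v (1,0) with hCq
  by_cases hA0 : A = 0
  · obtain ⟨a, b, hab⟩ := prod_of_det u (by rw [sub_eq_zero] at hA0; linear_combination hA0)
    exact ⟨a, b, by rw [hab]; exact hune, by rw [hab]; exact hup⟩
  · have hdeg : 0 < (Polynomial.C A * Polynomial.X ^ 2 + Polynomial.C Bq * Polynomial.X
        + Polynomial.C Cq).degree := by
      rw [Polynomial.degree_quadratic hA0]; norm_num
    obtain ⟨z, hz⟩ := Complex.exists_root hdeg
    have hz' : A * z ^ 2 + Bq * z + Cq = 0 := by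
      simpa [Polynomial.IsRoot, Polynomial.eval_add, Polynomial.eval_mul] using hz
    set w : EuclideanSpace ℂ (Fin 2 × Fin 2) := z • u + v with hw
    have hwp : w ∈ p := p.add_mem (p.smul_mem z hup) hvp
    have hwne : w ≠ 0 := hkey z
    have hwdet : w (0,0) * w (1,1) = w (0,1) * w (1,0) := by
      have e1 : ∀ q : Fin 2 × Fin 2, w q = z * u q + v q := by
        intro q; rfl
      rw [e1, e1, e1, e1]
      linear_combination hz'
    obtain ⟨a, b, hab⟩ := prod_of_det w hwdet
    exact ⟨a, b, by rw [hab]; exact hwne, by rw [hab]; exact hwp⟩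
end

section
/- Let ψ₁ = α₁·(e₀ ⊗ e₀) + α₂·(e₁ ⊗ e₁) and ψ₂ = β₁·(e₀ ⊗ e₁) + β₂·(e₁ ⊗ e₀) in ℂ² ⊗ ℂ², where α₁, α₂, β₁, β₂ are all nonzero complex numbers. Then the span of {ψ₁, ψ₂} admits a basis consisting of two product vectors, and the orthogonal complement of span{ψ₁, ψ₂} in ℂ² ⊗ ℂ² also admits a basis consisting of two product vectors. -/
open scoped ComplexConjugate

lemma aux_key (a₁ a₂ b₁ b₂ : ℂ) (ha₁ : a₁ ≠ 0) (ha₂ : a₂ ≠ 0)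
    (hb₁ : b₁ ≠ 0) (hb₂ : b₂ ≠ 0) :
    ∃ (x₁ y₁ x₂ y₂ : EuclideanSpace ℂ (Fin 2)),
      LinearIndependent ℂ ![tens x₁ y₁, tens x₂ y₂] ∧
      Submodule.span ℂ
        ({a₁ • tens (e 0) (e 0) + a₂ • tens (e 1) (e 1),
          b₁ • tens (e 0) (e 1) + b₂ • tens (e 1) (e 0)} :
          Set (EuclideanSpace ℂ (Fin 2 × Fin 2)))
        = Submodule.span ℂ {tens x₁ y₁, tens x₂ y₂} := by
  obtain ⟨c, hc⟩ := IsAlgClosed.exists_pow_nat_eq (a₂ * b₂ / (a₁ * b₁)) (n := 2) two_pos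
  have hc' : a₁ * b₁ * c ^ 2 = a₂ * b₂ := by
    rw [hc]; field_simp
  have hcne : c ≠ 0 := by
    intro h
    rw [h] at hc'
    simp at hc'
    exact absurd hc' (by simp [ha₂, hb₂])
  refine ⟨!₂[1, c], !₂[a₁ * c, a₂], !₂[1, -c], !₂[-(a₁ * c), a₂], ?_, ?_⟩
  · rw [LinearIndependent.pair_iff]
    intro s t hst
    have h0 := congrArg (fun v : EuclideanSpace ℂ (Fin 2 × Fin 2) => v (0, 0)) hst
    have h1 := congrArg (fun v : EuclideanSpace ℂ (Fin 2 × Fin 2) => v (0, 1)) hst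
    simp [tens] at h0 h1
    have hs : (s - t) * (a₁ * c) = 0 := by linear_combination h0
    have ht : (s + t) * a₂ = 0 := by linear_combination h1
    have h2 : s - t = 0 := by
      rcases mul_eq_zero.1 hs with h | h
      · exact h
      · exact absurd h (mul_ne_zero ha₁ hcne)
    have h3 : s + t = 0 := by
      rcases mul_eq_zero.1 ht with h | h
      · exact h
      · exact absurd h ha₂
    constructor
    · linear_combination (h2 + h3) / 2
    · linear_combination (h3 - h2) / 2
  · apply le_antisymm
    · rw [Submodule.span_le]
      rintro x hx
      simp only [Set.mem_insert_iff, Set.mem_singleton_iff] at hx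
      rcases hx with rfl | rfl
      · refine Submodule.mem_span_pair.2 ⟨(2 * c)⁻¹, -(2 * c)⁻¹, ?_⟩
        ext p
        fin_cases p <;> simp [tens, e, EuclideanSpace.single_apply]
        all_goals try field_simp
        all_goals first
          | ring1
          | linear_combination 2 * hc'
          | linear_combination hc'
          | linear_combination -hc'
          | linear_combination -2 * hc'
      · refine Submodule.mem_span_pair.2 ⟨b₁ / (2 * a₂), b₁ / (2 * a₂), ?_⟩
        ext p
        fin_cases p <;> simp [tens, e, EuclideanSpace.single_apply]
        all_goals try field_simp
        all_goals first
          | ring1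
          | linear_combination 2 * hc'
          | linear_combination hc'
          | linear_combination -hc'
          | linear_combination -2 * hc'
    · rw [Submodule.span_le]
      rintro x hx
      simp only [Set.mem_insert_iff, Set.mem_singleton_iff] at hx
      rcases hx with rfl | rfl
      · refine Submodule.mem_span_pair.2 ⟨c, a₂ / b₁, ?_⟩
        ext p
        fin_cases p <;> simp [tens, e, EuclideanSpace.single_apply]
        all_goals try field_simp
        all_goals first
          | ring1
          | linear_combination 2 * hc'
          | linear_combination hc'
          | linear_combination -hc'
          | linear_combination -2 * hc'
      · refine Submodule.mem_span_pair.2 ⟨-c, a₂ / b₁, ?_⟩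
        ext p
        fin_cases p <;> simp [tens, e, EuclideanSpace.single_apply]
        all_goals try field_simp
        all_goals first
          | ring1
          | linear_combination 2 * hc'
          | linear_combination hc'
          | linear_combination -hc'
          | linear_combination -2 * hc'

theorem stmt_5 (α₁ α₂ β₁ β₂ : ℂ) (hα₁ : α₁ ≠ 0) (hα₂ : α₂ ≠ 0)
    (hβ₁ : β₁ ≠ 0) (hβ₂ : β₂ ≠ 0)
    (ψ₁ ψ₂ : EuclideanSpace ℂ (Fin 2 × Fin 2))
    (hψ₁ : ψ₁ = α₁ • tens (e 0) (e 0) + α₂ • tens (e 1) (e 1))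
    (hψ₂ : ψ₂ = β₁ • tens (e 0) (e 1) + β₂ • tens (e 1) (e 0)) :
    (∃ (a₁ b₁ a₂ b₂ : EuclideanSpace ℂ (Fin 2)),
      LinearIndependent ℂ ![tens a₁ b₁, tens a₂ b₂] ∧
      Submodule.span ℂ {ψ₁, ψ₂} = Submodule.span ℂ {tens a₁ b₁, tens a₂ b₂}) ∧
    (∃ (a₁ b₁ a₂ b₂ : EuclideanSpace ℂ (Fin 2)),
      LinearIndependent ℂ ![tens a₁ b₁, tens a₂ b₂] ∧
      (Submodule.span ℂ {ψ₁, ψ₂})ᗮ = Submodule.span ℂ {tens a₁ b₁, tens a₂ b₂}) := by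
  subst hψ₁ hψ₂
  obtain ⟨x₁, y₁, x₂, y₂, hli, hspan⟩ := aux_key α₁ α₂ β₁ β₂ hα₁ hα₂ hβ₁ hβ₂
  refine ⟨⟨x₁, y₁, x₂, y₂, hli, hspan⟩, ?_⟩
  -- orthogonal complement
  set ψ₁ := α₁ • tens (e 0) (e 0) + α₂ • tens (e 1) (e 1) with hψ₁
  set ψ₂ := β₁ • tens (e 0) (e 1) + β₂ • tens (e 1) (e 0) with hψ₂
  set φ₁ : EuclideanSpace ℂ (Fin 2 × Fin 2) :=
    (conj α₂) • tens (e 0) (e 0) + (-(conj α₁)) • tens (e 1) (e 1) with hφ₁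
  set φ₂ : EuclideanSpace ℂ (Fin 2 × Fin 2) :=
    (conj β₂) • tens (e 0) (e 1) + (-(conj β₁)) • tens (e 1) (e 0) with hφ₂
  obtain ⟨u₁, v₁, u₂, v₂, hli', hspan'⟩ :=
    aux_key (conj α₂) (-(conj α₁)) (conj β₂) (-(conj β₁))
      (by simpa using hα₂) (by simpa using hα₁) (by simpa using hβ₂) (by simpa using hβ₁)
  refine ⟨u₁, v₁, u₂, v₂, hli', ?_⟩
  have hortho : Submodule.span ℂ ({φ₁, φ₂} : Set (EuclideanSpace ℂ (Fin 2 × Fin 2)))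
      ≤ (Submodule.span ℂ ({ψ₁, ψ₂} : Set (EuclideanSpace ℂ (Fin 2 × Fin 2))))ᗮ := by
    refine (Submodule.isOrtho_span.2 ?_).symm
    rintro u hu v hv
    simp only [Set.mem_insert_iff, Set.mem_singleton_iff] at hu hv
    rcases hu with rfl | rfl <;> rcases hv with rfl | rfl <;>
      simp [hψ₁, hψ₂, hφ₁, hφ₂, PiLp.inner_apply, RCLike.inner_apply,
        Fintype.sum_prod_type, Fin.sum_univ_two, tens, e, EuclideanSpace.single_apply,
        mul_comm]
  have hrank : ∀ (w₁ w₂ : EuclideanSpace ℂ (Fin 2 × Fin 2)),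
      LinearIndependent ℂ ![w₁, w₂] →
      Module.finrank ℂ (Submodule.span ℂ ({w₁, w₂} : Set (EuclideanSpace ℂ (Fin 2 × Fin 2)))) = 2 := by
    intro w₁ w₂ h
    have := finrank_span_eq_card h
    rwa [Matrix.range_cons_cons_empty, Fintype.card_fin] at this
  have hK : Module.finrank ℂ
      (Submodule.span ℂ ({ψ₁, ψ₂} : Set (EuclideanSpace ℂ (Fin 2 × Fin 2)))) = 2 := by
    rw [hspan]; exact hrank _ _ hli
  have hφ : Module.finrank ℂ
      (Submodule.span ℂ ({φ₁, φ₂} : Set (EuclideanSpace ℂ (Fin 2 × Fin 2)))) = 2 := by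
    rw [hspan']; exact hrank _ _ hli'
  have hE : Module.finrank ℂ (EuclideanSpace ℂ (Fin 2 × Fin 2)) = 4 := by
    simp [finrank_euclideanSpace]
  have hKperp : Module.finrank ℂ
      ((Submodule.span ℂ ({ψ₁, ψ₂} : Set (EuclideanSpace ℂ (Fin 2 × Fin 2))))ᗮ) = 2 := by
    apply Submodule.finrank_add_finrank_orthogonal' (K := Submodule.span ℂ {ψ₁, ψ₂})
    rw [hK, hE]
  have heq : Submodule.span ℂ ({φ₁, φ₂} : Set (EuclideanSpace ℂ (Fin 2 × Fin 2)))
      = (Submodule.span ℂ ({ψ₁, ψ₂} : Set (EuclideanSpace ℂ (Fin 2 × Fin 2))))ᗮ :=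
    Submodule.eq_of_le_of_finrank_eq hortho (by rw [hφ, hKperp])
  rw [← heq, hspan']
end

section
/- Let ψ₁, ψ₂ ∈ ℂ² ⊗ ℂ² be linearly independent product vectors. Then the orthogonal complement of span{ψ₁, ψ₂} is spanned by two product vectors. -/
open ComplexConjugate

/-- Vector orthogonal to `v` in `ℂ²`. -/
noncomputable def perp (v : EuclideanSpace ℂ (Fin 2)) : EuclideanSpace ℂ (Fin 2) :=
  WithLp.toLp 2 ![-(conj (v 1)), conj (v 0)]

lemma inner_tens (a b x y : EuclideanSpace ℂ (Fin 2)) :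
    (inner ℂ (tens a b) (tens x y) : ℂ) = (inner ℂ a x : ℂ) * (inner ℂ b y : ℂ) := by
  simp [tens, PiLp.inner_apply, Fintype.sum_prod_type, Fin.sum_univ_two, map_mul]
  ring

lemma inner_perp (a v : EuclideanSpace ℂ (Fin 2)) :
    (inner ℂ a (perp v) : ℂ) = conj (a 1 * v 0 - a 0 * v 1) := by
  simp [perp, PiLp.inner_apply, Fin.sum_univ_two, map_sub, map_mul]
  ring

lemma inner_perp_self (a : EuclideanSpace ℂ (Fin 2)) : (inner ℂ a (perp a) : ℂ) = 0 := by
  rw [inner_perp, mul_comm, sub_self, map_zero]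

lemma exists_ne_zero {a : EuclideanSpace ℂ (Fin 2)} (ha : a ≠ 0) : ∃ i, a i ≠ 0 := by
  by_contra hc
  push_neg at hc
  exact ha (PiLp.ext fun i => by simp [hc i])

lemma tens_ne_left {a b : EuclideanSpace ℂ (Fin 2)} (h : tens a b ≠ 0) : a ≠ 0 := by
  rintro rfl; exact h (PiLp.ext fun p => by simp [tens])

lemma tens_ne_right {a b : EuclideanSpace ℂ (Fin 2)} (h : tens a b ≠ 0) : b ≠ 0 := by
  rintro rfl; exact h (PiLp.ext fun p => by simp [tens])

lemma perp_ne_zero {a : EuclideanSpace ℂ (Fin 2)} (ha : a ≠ 0) : perp a ≠ 0 := by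
  obtain ⟨i, hi⟩ := exists_ne_zero ha
  intro hp
  have h0 := congrArg (fun x : EuclideanSpace ℂ (Fin 2) => x 0) hp
  have h1 := congrArg (fun x : EuclideanSpace ℂ (Fin 2) => x 1) hp
  simp [perp] at h0 h1
  fin_cases i
  · exact hi h1
  · exact hi h0

lemma indep_case1 {u x w y : EuclideanSpace ℂ (Fin 2)}
    (hdet : u 0 * x 1 - u 1 * x 0 ≠ 0) (hw : w ≠ 0) (hy : y ≠ 0) :
    LinearIndependent ℂ ![tens u w, tens x y] := by
  have hx : x ≠ 0 := by rintro rfl; simp at hdet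
  rw [LinearIndependent.pair_iff]
  intro s t hst
  have hev : ∀ i j : Fin 2, s * (u i * w j) + t * (x i * y j) = 0 := by
    intro i j
    have := congrArg (fun v : EuclideanSpace ℂ (Fin 2 × Fin 2) => v (i, j)) hst
    simpa [tens] using this
  obtain ⟨j, hj⟩ := exists_ne_zero hw
  have hs : s = 0 := by
    have hkey : s * w j * (u 0 * x 1 - u 1 * x 0) = 0 := by
      linear_combination x 1 * hev 0 j - x 0 * hev 1 j
    rcases mul_eq_zero.mp hkey with h' | h'
    · rcases mul_eq_zero.mp h' with h'' | h''
      · exact h''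
      · exact absurd h'' hj
    · exact absurd h' hdet
  subst hs
  obtain ⟨i', hi'⟩ := exists_ne_zero hx
  obtain ⟨j', hj'⟩ := exists_ne_zero hy
  have := hev i' j'
  simp at this
  rcases this with h' | h' | h'
  · exact ⟨rfl, h'⟩
  · exact absurd h' hi'
  · exact absurd h' hj'

lemma indep_case2 {u : EuclideanSpace ℂ (Fin 2)} (hu : u ≠ 0) :
    LinearIndependent ℂ ![tens u (e 0), tens u (e 1)] := by
  rw [LinearIndependent.pair_iff]
  intro s t hst
  obtain ⟨i, hi⟩ := exists_ne_zero hu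
  have h0 := congrArg (fun v : EuclideanSpace ℂ (Fin 2 × Fin 2) => v (i, 0)) hst
  have h1 := congrArg (fun v : EuclideanSpace ℂ (Fin 2 × Fin 2) => v (i, 1)) hst
  simp [tens, e, EuclideanSpace.single_apply] at h0 h1
  constructor
  · rcases h0 with h' | h'
    exacts [h', absurd h' hi]
  · rcases h1 with h' | h'
    exacts [h', absurd h' hi]

lemma finrank_span_pair {E : Type*} [NormedAddCommGroup E] [InnerProductSpace ℂ E]
    (v₁ v₂ : E) (h : LinearIndependent ℂ ![v₁, v₂]) :
    Module.finrank ℂ (Submodule.span ℂ {v₁, v₂}) = 2 := by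
  have : ({v₁, v₂} : Set E) = Set.range ![v₁, v₂] := by
    simp [Matrix.range_cons, Matrix.range_empty, Set.insert_comm, Set.pair_comm]
  rw [this, finrank_span_eq_card h]
  simp

lemma ortho_eq (ψ₁ ψ₂ v₁ v₂ : EuclideanSpace ℂ (Fin 2 × Fin 2))
    (h : LinearIndependent ℂ ![ψ₁, ψ₂]) (hv : LinearIndependent ℂ ![v₁, v₂])
    (h11 : (inner ℂ ψ₁ v₁ : ℂ) = 0) (h12 : (inner ℂ ψ₁ v₂ : ℂ) = 0)
    (h21 : (inner ℂ ψ₂ v₁ : ℂ) = 0) (h22 : (inner ℂ ψ₂ v₂ : ℂ) = 0) :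
    (Submodule.span ℂ {ψ₁, ψ₂})ᗮ = Submodule.span ℂ {v₁, v₂} := by
  have key : ∀ w : EuclideanSpace ℂ (Fin 2 × Fin 2), (inner ℂ ψ₁ w : ℂ) = 0 → (inner ℂ ψ₂ w : ℂ) = 0 →
      w ∈ (Submodule.span ℂ {ψ₁, ψ₂})ᗮ := by
    intro w hw1 hw2
    rw [Submodule.mem_orthogonal]
    intro u hu
    rw [Submodule.mem_span_pair] at hu
    obtain ⟨s, t, rfl⟩ := hu
    simp [inner_add_left, inner_smul_left, hw1, hw2]
  have hle : Submodule.span ℂ {v₁, v₂} ≤ (Submodule.span ℂ {ψ₁, ψ₂})ᗮ := by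
    rw [Submodule.span_le]
    rintro x (rfl | rfl)
    · exact key _ h11 h21
    · exact key _ h12 h22
  refine (Submodule.eq_of_le_of_finrank_eq hle ?_).symm
  have htot : Module.finrank ℂ (EuclideanSpace ℂ (Fin 2 × Fin 2)) = 4 := by
    simp [finrank_euclideanSpace]
  have h1 := Submodule.finrank_add_finrank_orthogonal (K := Submodule.span ℂ {ψ₁, ψ₂})
  rw [finrank_span_pair _ _ h, htot] at h1
  rw [finrank_span_pair _ _ hv]
  omega

theorem stmt_6 (ψ₁ ψ₂ : EuclideanSpace ℂ (Fin 2 × Fin 2))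
    (h : LinearIndependent ℂ ![ψ₁, ψ₂])
    (h₁ : ∃ a b, ψ₁ = tens a b) (h₂ : ∃ a b, ψ₂ = tens a b) :
    ∃ (a₁ b₁ a₂ b₂ : EuclideanSpace ℂ (Fin 2)),
      (Submodule.span ℂ {ψ₁, ψ₂})ᗮ = Submodule.span ℂ {tens a₁ b₁, tens a₂ b₂} := by
  obtain ⟨a, b, rfl⟩ := h₁
  obtain ⟨c, d, rfl⟩ := h₂
  have hψ₁ : tens a b ≠ 0 := by
    have := h.ne_zero 0; simpa using this
  have hψ₂ : tens c d ≠ 0 := by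
    have := h.ne_zero 1; simpa using this
  have ha : a ≠ 0 := tens_ne_left hψ₁
  have hb : b ≠ 0 := tens_ne_right hψ₁
  have hc : c ≠ 0 := tens_ne_left hψ₂
  have hd : d ≠ 0 := tens_ne_right hψ₂
  by_cases hac : a 0 * c 1 = a 1 * c 0
  · -- a ∥ c : complement is (perp a) ⊗ ℂ²
    refine ⟨perp a, e 0, perp a, e 1, ?_⟩
    have hca : (inner ℂ c (perp a) : ℂ) = 0 := by
      rw [inner_perp]
      have : c 1 * a 0 - c 0 * a 1 = 0 := by linear_combination hac
      rw [this, map_zero]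
    refine ortho_eq _ _ _ _ h (indep_case2 (perp_ne_zero ha)) ?_ ?_ ?_ ?_
    · rw [inner_tens, inner_perp_self, zero_mul]
    · rw [inner_tens, inner_perp_self, zero_mul]
    · rw [inner_tens, hca, zero_mul]
    · rw [inner_tens, hca, zero_mul]
  · -- general case
    refine ⟨perp a, perp d, perp c, perp b, ?_⟩
    have hdet : perp a 0 * perp c 1 - perp a 1 * perp c 0 ≠ 0 := by
      simp only [perp, PiLp.toLp_apply, Matrix.cons_val_zero, Matrix.cons_val_one, Matrix.head_cons]
      intro hz
      apply hac
      have hz' : conj (a 0 * c 1 - a 1 * c 0) = 0 := by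
        rw [map_sub, map_mul, map_mul]
        linear_combination hz
      rw [map_eq_zero] at hz'
      linear_combination hz'
    refine ortho_eq _ _ _ _ h
      (indep_case1 hdet (perp_ne_zero hd) (perp_ne_zero hb)) ?_ ?_ ?_ ?_
    · rw [inner_tens, inner_perp_self, zero_mul]
    · rw [inner_tens, inner_perp_self b, mul_zero]
    · rw [inner_tens, inner_perp_self d, mul_zero]
    · rw [inner_tens, inner_perp_self, zero_mul]
end

section
/- Let ψ₁, ψ₂, ψ₃ ∈ ℂ² ⊗ ℂ² be linearly independent, and suppose the orthogonal complement of span{ψ₁, ψ₂} is spanned by two product vectors. Then there exists a product vector φ = a ⊗ b with ⟨ψ₁, φ⟩ = 0, ⟨ψ₂, φ⟩ = 0, and ⟨ψ₃, φ⟩ ≠ 0. -/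
theorem stmt_7 (ψ₁ ψ₂ ψ₃ : EuclideanSpace ℂ (Fin 2 × Fin 2))
    (h : LinearIndependent ℂ ![ψ₁, ψ₂, ψ₃])
    (hperp : ∃ (a₁ b₁ a₂ b₂ : EuclideanSpace ℂ (Fin 2)),
      (Submodule.span ℂ {ψ₁, ψ₂})ᗮ = Submodule.span ℂ {tens a₁ b₁, tens a₂ b₂}) :
    ∃ (a b : EuclideanSpace ℂ (Fin 2)),
      (inner ℂ ψ₁ (tens a b) : ℂ) = 0 ∧ (inner ℂ ψ₂ (tens a b) : ℂ) = 0 ∧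
      (inner ℂ ψ₃ (tens a b) : ℂ) ≠ 0 := by
  obtain ⟨a₁, b₁, a₂, b₂, hW⟩ := hperp
  set S : Submodule ℂ (EuclideanSpace ℂ (Fin 2 × Fin 2)) := Submodule.span ℂ {ψ₁, ψ₂}
  -- ψ₃ ∉ S
  have hψ₃ : ψ₃ ∉ S := by
    have h2 : (2 : Fin 3) ∉ ({0, 1} : Set (Fin 3)) := by decide
    have := h.notMem_span_image h2
    have himg : (![ψ₁, ψ₂, ψ₃] '' ({0, 1} : Set (Fin 3))) = {ψ₁, ψ₂} := by
      simp [Set.image_insert_eq]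
    rw [himg] at this
    simpa using this
  -- generators are in Sᗮ
  have hg1 : tens a₁ b₁ ∈ Sᗮ := by
    rw [hW]; exact Submodule.subset_span (by simp)
  have hg2 : tens a₂ b₂ ∈ Sᗮ := by
    rw [hW]; exact Submodule.subset_span (by simp)
  have h11 : (inner ℂ ψ₁ (tens a₁ b₁) : ℂ) = 0 :=
    hg1 ψ₁ (Submodule.subset_span (by simp))
  have h21 : (inner ℂ ψ₂ (tens a₁ b₁) : ℂ) = 0 :=
    hg1 ψ₂ (Submodule.subset_span (by simp))
  have h12 : (inner ℂ ψ₁ (tens a₂ b₂) : ℂ) = 0 :=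
    hg2 ψ₁ (Submodule.subset_span (by simp))
  have h22 : (inner ℂ ψ₂ (tens a₂ b₂) : ℂ) = 0 :=
    hg2 ψ₂ (Submodule.subset_span (by simp))
  by_cases hc : (inner ℂ ψ₃ (tens a₁ b₁) : ℂ) ≠ 0
  · exact ⟨a₁, b₁, h11, h21, hc⟩
  by_cases hc2 : (inner ℂ ψ₃ (tens a₂ b₂) : ℂ) ≠ 0
  · exact ⟨a₂, b₂, h12, h22, hc2⟩
  exfalso
  push_neg at hc hc2
  -- then ψ₃ ∈ Sᗮᗮ = S
  apply hψ₃
  rw [← Submodule.orthogonal_orthogonal S]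
  intro u hu
  rw [hW] at hu
  have : Sᗮ ≤ (Submodule.span ℂ ({ψ₃} : Set _))ᗮ := by
    rw [hW, Submodule.span_le]
    intro x hx
    rcases hx with hx | hx
    · subst hx
      intro v hv
      rw [Submodule.mem_span_singleton] at hv
      obtain ⟨c, rfl⟩ := hv
      simp [inner_smul_left]
      right
      simpa [inner_eq_zero_symm] using hc
    · simp only [Set.mem_singleton_iff] at hx
      subst hx
      intro v hv
      rw [Submodule.mem_span_singleton] at hv
      obtain ⟨c, rfl⟩ := hv
      simp [inner_smul_left]
      right
      simpa [inner_eq_zero_symm] using hc2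
  have hu' := this (by rw [hW]; exact hu)
  rw [inner_eq_zero_symm]; exact hu' ψ₃ (Submodule.mem_span_singleton_self ψ₃)
end

section
/- Let ψ₁, ψ₂, ψ₃ ∈ ℂ² ⊗ ℂ² be linearly independent. Then there exists an index x ∈ {1,2,3} and a product vector φ = a ⊗ b such that ⟨ψᵢ, φ⟩ = 0 for both i ≠ x and ⟨ψₓ, φ⟩ ≠ 0. -/
open Submodule

abbrev E9 := EuclideanSpace ℂ (Fin 2 × Fin 2)

noncomputable def det4 (v : E9) : ℂ := v (0,0) * v (1,1) - v (0,1) * v (1,0)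
noncomputable def bform (u v : E9) : ℂ :=
  u (0,0) * v (1,1) + u (1,1) * v (0,0) - u (0,1) * v (1,0) - u (1,0) * v (0,1)

lemma det4_add_smul (u v : E9) (t : ℂ) :
    det4 (u + t • v) = det4 u + t * bform u v + t^2 * det4 v := by
  simp only [det4, bform, PiLp.add_apply, PiLp.smul_apply, smul_eq_mul]
  ring

lemma bform_comb (u z w : E9) (c d : ℂ) :
    bform u (c • z + d • w) = c * bform u z + d * bform u w := by
  simp only [bform, PiLp.add_apply, PiLp.smul_apply, smul_eq_mul]
  ring

lemma bform_self (u : E9) : bform u u = 2 * det4 u := by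
  simp only [bform, det4]; ring

lemma rank1 (v : E9) (hdet : det4 v = 0) : ∃ a b, tens a b = v := by
  by_cases h0 : v = 0
  · exact ⟨0, 0, by ext p; simp [tens, h0]⟩
  · have : ∃ i j, v (i,j) ≠ 0 := by
      by_contra hh
      push_neg at hh
      exact h0 (by ext p; exact hh p.1 p.2)
    obtain ⟨i, j, hij⟩ := this
    refine ⟨WithLp.toLp 2 (fun k => v (k, j)),
            WithLp.toLp 2 (fun l => v (i, l) / v (i, j)), ?_⟩
    ext p
    obtain ⟨k, l⟩ := p
    show v (k, j) * (v (i, l) / v (i, j)) = v (k, l)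
    rw [mul_div_assoc', div_eq_iff hij]
    simp only [det4] at hdet
    fin_cases i <;> fin_cases j <;> fin_cases k <;> fin_cases l <;>
      simp only [Fin.mk_zero, Fin.mk_one] <;>
      first
        | ring1
        | linear_combination hdet
        | linear_combination -hdet

lemma quad_root (A B C : ℂ) (hA : A ≠ 0) : ∃ s, A * s^2 + B * s + C = 0 := by
  obtain ⟨r, hr⟩ := Complex.isAlgClosed.exists_pow_nat_eq (B^2 - 4*A*C) zero_lt_two
  refine ⟨(r - B) / (2 * A), ?_⟩
  field_simp
  ring_nf
  linear_combination hr

lemma mem_orth_span (s : Set E9) (z : E9) (hz : ∀ u ∈ s, (inner ℂ u z : ℂ) = 0) :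
    z ∈ (span ℂ s)ᗮ := by
  intro u hu
  induction hu using Submodule.span_induction with
  | mem x hx => exact hz x hx
  | zero => simp
  | add x y _ _ hx hy => rw [inner_add_left, hx, hy, add_zero]
  | smul c x _ hx => rw [inner_smul_left, hx, mul_zero]

lemma pair_indep {v w : E9} (hv : v ≠ 0) (hw : w ∉ span ℂ ({v} : Set E9)) :
    LinearIndependent ℂ ![v, w] := by
  rw [LinearIndependent.pair_iff]
  intro s t hst
  by_cases ht : t = 0
  · subst ht
    simp only [zero_smul, add_zero, smul_eq_zero] at hst
    exact ⟨hst.resolve_right hv, rfl⟩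
  · exfalso
    apply hw
    rw [Submodule.mem_span_singleton]
    refine ⟨t⁻¹ * (-s), ?_⟩
    have h1 : t • w = (-s) • v := by
      rw [neg_smul]
      exact eq_neg_of_add_eq_zero_right hst
    calc (t⁻¹ * (-s)) • v = t⁻¹ • ((-s) • v) := by rw [smul_smul]
      _ = t⁻¹ • (t • w) := by rw [h1]
      _ = w := inv_smul_smul₀ ht w

lemma span_pair_eq_range (v w : E9) :
    span ℂ ({v, w} : Set E9) = span ℂ (Set.range ![v, w]) := by
  congr 1
  simp [Matrix.range_cons, Matrix.range_empty, Set.pair_comm]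

lemma finrank_E9 : Module.finrank ℂ E9 = 4 := by
  simp [finrank_euclideanSpace]

lemma step (u v w φ : E9)
    (hind : ∀ a b c : ℂ, a • u + b • v + c • w = 0 → a = 0 ∧ b = 0 ∧ c = 0)
    (hφ0 : φ ≠ 0)
    (hφv : (inner ℂ v φ : ℂ) = 0) (hφw : (inner ℂ w φ : ℂ) = 0)
    (hspan : ∀ z : E9, (inner ℂ u z : ℂ) = 0 → (inner ℂ v z : ℂ) = 0 → (inner ℂ w z : ℂ) = 0 →
      z ∈ span ℂ ({φ} : Set E9))
    (hcontra : ∀ a b : EuclideanSpace ℂ (Fin 2),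
      (inner ℂ v (tens a b) : ℂ) = 0 → (inner ℂ w (tens a b) : ℂ) = 0 →
      (inner ℂ u (tens a b) : ℂ) = 0) :
    det4 φ = 0 ∧ ∀ z : E9, (inner ℂ v z : ℂ) = 0 → (inner ℂ w z : ℂ) = 0 → bform φ z = 0 := by
  set W : Submodule ℂ E9 := (span ℂ ({v, w} : Set E9))ᗮ with hWdef
  have hWmem : ∀ z : E9, z ∈ W ↔ (inner ℂ v z : ℂ) = 0 ∧ (inner ℂ w z : ℂ) = 0 := by
    intro z
    constructor
    · intro hz
      exact ⟨hz v (subset_span (by simp)), hz w (subset_span (by simp))⟩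
    · rintro ⟨h1, h2⟩
      apply mem_orth_span
      rintro x (rfl | rfl)
      · exact h1
      · exact h2
  have hprod : ∀ z ∈ W, det4 z = 0 → z ∈ span ℂ ({φ} : Set E9) := by
    intro z hz hdz
    obtain ⟨a, b, rfl⟩ := rank1 z hdz
    have := (hWmem _).1 hz
    exact hspan _ (hcontra a b this.1 this.2) this.1 this.2
  have hvw : LinearIndependent ℂ ![v, w] := by
    rw [LinearIndependent.pair_iff]
    intro s t hst
    have := hind 0 s t (by simpa using hst)
    exact ⟨this.2.1, this.2.2⟩
  have hrankvw : Module.finrank ℂ (span ℂ ({v, w} : Set E9)) = 2 := by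
    rw [span_pair_eq_range, finrank_span_eq_card hvw]
    simp
  have hrankW : Module.finrank ℂ W = 2 := by
    have := Submodule.finrank_add_finrank_orthogonal (span ℂ ({v, w} : Set E9))
    rw [hrankvw, finrank_E9, ← hWdef] at this
    omega
  have hφW : φ ∈ W := (hWmem φ).2 ⟨hφv, hφw⟩
  obtain ⟨w', hw'W, hw'span⟩ : ∃ w' ∈ W, w' ∉ span ℂ ({φ} : Set E9) := by
    by_contra hcon
    push_neg at hcon
    have hle : W ≤ span ℂ ({φ} : Set E9) := hcon
    have h1 := Submodule.finrank_mono (M := E9) (R := ℂ) hle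
    rw [hrankW, finrank_span_singleton hφ0] at h1
    exact absurd h1 (by norm_num)
  have hdw' : det4 w' ≠ 0 := by
    intro hdz
    exact hw'span (hprod w' hw'W hdz)
  have hd : det4 φ = 0 := by
    by_contra hne
    obtain ⟨s, hs⟩ := quad_root (det4 φ) (bform w' φ) (det4 w') hne
    have hzW : w' + s • φ ∈ W := W.add_mem hw'W (W.smul_mem s hφW)
    have hdz : det4 (w' + s • φ) = 0 := by
      rw [det4_add_smul]
      linear_combination hs
    have hmem := hprod _ hzW hdz
    apply hw'span
    have : w' = (w' + s • φ) - s • φ := by abel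
    rw [this]
    exact Submodule.sub_mem _ hmem (Submodule.smul_mem _ s
      (Submodule.mem_span_singleton_self φ))
  have hbw' : bform φ w' = 0 := by
    set t : ℂ := -(bform φ w') / det4 w' with ht
    have hdz : det4 (φ + t • w') = 0 := by
      rw [det4_add_smul, hd, ht]
      field_simp
      ring
    have hzW : φ + t • w' ∈ W := W.add_mem hφW (W.smul_mem t hw'W)
    have hmem := hprod _ hzW hdz
    have htw : t • w' ∈ span ℂ ({φ} : Set E9) := by
      have : t • w' = (φ + t • w') - φ := by abel
      rw [this]
      exact Submodule.sub_mem _ hmem (Submodule.mem_span_singleton_self φ)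
    by_cases htz : t = 0
    · rw [ht] at htz
      rw [div_eq_zero_iff] at htz
      rcases htz with h1 | h1
      · exact neg_eq_zero.mp h1
      · exact absurd h1 hdw'
    · exfalso
      apply hw'span
      have : w' = t⁻¹ • (t • w') := (inv_smul_smul₀ htz w').symm
      rw [this]
      exact Submodule.smul_mem _ _ htw
  refine ⟨hd, ?_⟩
  intro z hz1 hz2
  have hzW : z ∈ W := (hWmem z).2 ⟨hz1, hz2⟩
  have hφw' : LinearIndependent ℂ ![φ, w'] := pair_indep hφ0 hw'span
  have hspan2 : span ℂ ({φ, w'} : Set E9) = W := by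
    apply Submodule.eq_of_le_of_finrank_le
    · rw [Submodule.span_le]
      rintro x (rfl | rfl)
      · exact hφW
      · exact hw'W
    · rw [hrankW, span_pair_eq_range, finrank_span_eq_card hφw']
      simp
  rw [← hspan2] at hzW
  obtain ⟨c, d, hcd⟩ := Submodule.mem_span_pair.1 hzW
  rw [← hcd, bform_comb, hbw', bform_self, hd]
  ring

theorem stmt_9 (ψ : Fin 3 → EuclideanSpace ℂ (Fin 2 × Fin 2))
    (h : LinearIndependent ℂ ψ) :
    ∃ (x : Fin 3) (a b : EuclideanSpace ℂ (Fin 2)),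
      (∀ i, i ≠ x → (inner ℂ (ψ i) (tens a b) : ℂ) = 0) ∧
      (inner ℂ (ψ x) (tens a b) : ℂ) ≠ 0 := by
  by_contra hc
  push_neg at hc
  -- linear independence in symmetric form
  have hind : ∀ a b c : ℂ, a • ψ 0 + b • ψ 1 + c • ψ 2 = 0 → a = 0 ∧ b = 0 ∧ c = 0 := by
    intro a b c habc
    have := Fintype.linearIndependent_iff.mp h ![a, b, c] (by
      rw [Fin.sum_univ_three]
      simpa using habc)
    exact ⟨this 0, this 1, this 2⟩
  -- the orthogonal complement of the span of all three
  have hrankS : Module.finrank ℂ (span ℂ (Set.range ψ)) = 3 := by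
    rw [finrank_span_eq_card h]; simp
  have hrankSp : Module.finrank ℂ ((span ℂ (Set.range ψ))ᗮ) = 1 := by
    have := Submodule.finrank_add_finrank_orthogonal (K := span ℂ (Set.range ψ))
    rw [hrankS, finrank_E9] at this
    omega
  obtain ⟨φ, hφSp, hφ0⟩ : ∃ φ ∈ (span ℂ (Set.range ψ))ᗮ, φ ≠ 0 := by
    apply Submodule.exists_mem_ne_zero_of_ne_bot
    intro hbot
    rw [hbot] at hrankSp
    simp at hrankSp
  have hSpeq : span ℂ ({φ} : Set E9) = (span ℂ (Set.range ψ))ᗮ := by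
    apply Submodule.eq_of_le_of_finrank_le
    · rw [Submodule.span_le, Set.singleton_subset_iff]
      exact hφSp
    · rw [hrankSp, finrank_span_singleton hφ0]
  have hspan : ∀ z : E9, (∀ i, (inner ℂ (ψ i) z : ℂ) = 0) → z ∈ span ℂ ({φ} : Set E9) := by
    intro z hz
    rw [hSpeq]
    apply mem_orth_span
    rintro u ⟨i, rfl⟩
    exact hz i
  have hφi : ∀ i, (inner ℂ (ψ i) φ : ℂ) = 0 :=
    fun i => hφSp (ψ i) (subset_span (Set.mem_range_self i))
  -- the contradiction hypothesis, specialised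
  have hc0 : ∀ a b : EuclideanSpace ℂ (Fin 2),
      (inner ℂ (ψ 1) (tens a b) : ℂ) = 0 → (inner ℂ (ψ 2) (tens a b) : ℂ) = 0 →
      (inner ℂ (ψ 0) (tens a b) : ℂ) = 0 := by
    intro a b h1 h2
    refine hc 0 a b (fun i hi => ?_)
    rcases show i = 1 ∨ i = 2 from by omega with rfl | rfl
    · exact h1
    · exact h2
  have hc1 : ∀ a b : EuclideanSpace ℂ (Fin 2),
      (inner ℂ (ψ 0) (tens a b) : ℂ) = 0 → (inner ℂ (ψ 2) (tens a b) : ℂ) = 0 →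
      (inner ℂ (ψ 1) (tens a b) : ℂ) = 0 := by
    intro a b h1 h2
    refine hc 1 a b (fun i hi => ?_)
    rcases show i = 0 ∨ i = 2 from by omega with rfl | rfl
    · exact h1
    · exact h2
  have hc2 : ∀ a b : EuclideanSpace ℂ (Fin 2),
      (inner ℂ (ψ 0) (tens a b) : ℂ) = 0 → (inner ℂ (ψ 1) (tens a b) : ℂ) = 0 →
      (inner ℂ (ψ 2) (tens a b) : ℂ) = 0 := by
    intro a b h1 h2
    refine hc 2 a b (fun i hi => ?_)
    rcases show i = 0 ∨ i = 1 from by omega with rfl | rfl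
    · exact h1
    · exact h2
  -- apply the key step lemma in three ways
  have s0 := step (ψ 0) (ψ 1) (ψ 2) φ hind hφ0 (hφi 1) (hφi 2)
    (fun z h0 h1 h2 => hspan z (fun i => by fin_cases i <;> assumption)) hc0
  have s1 := step (ψ 1) (ψ 0) (ψ 2) φ
    (by
      intro a b c habc
      have := hind b a c (by
        rw [show b • ψ 0 + a • ψ 1 + c • ψ 2 = a • ψ 1 + b • ψ 0 + c • ψ 2 by module]
        exact habc)
      exact ⟨this.2.1, this.1, this.2.2⟩)
    hφ0 (hφi 0) (hφi 2)
    (fun z h1 h0 h2 => hspan z (fun i => by fin_cases i <;> assumption)) hc1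
  have s2 := step (ψ 2) (ψ 0) (ψ 1) φ
    (by
      intro a b c habc
      have := hind b c a (by
        rw [show b • ψ 0 + c • ψ 1 + a • ψ 2 = a • ψ 2 + b • ψ 0 + c • ψ 1 by module]
        exact habc)
      exact ⟨this.2.2, this.1, this.2.1⟩)
    hφ0 (hφi 0) (hφi 1)
    (fun z h2 h0 h1 => hspan z (fun i => by fin_cases i <;> assumption)) hc2
  -- the vector representing the linear functional `bform φ`
  set m : E9 := WithLp.toLp 2 (fun p : Fin 2 × Fin 2 => starRingEnd ℂ
    (![![φ (1,1), -φ (1,0)], ![-φ (0,1), φ (0,0)]] p.1 p.2)) with hmdef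
  have hm : ∀ z : E9, (inner ℂ m z : ℂ) = bform φ z := by
    intro z
    simp only [hmdef, PiLp.inner_apply, PiLp.toLp_apply, RCLike.inner_apply, Fintype.sum_prod_type,
      Fin.sum_univ_two, bform]
    simp only [Matrix.cons_val', Matrix.cons_val_zero, Matrix.cons_val_one, Matrix.head_cons,
      Matrix.empty_val', Matrix.cons_val_fin_one, Matrix.head_fin_const, map_neg,
      Complex.conj_conj, RingHomCompTriple.comp_apply, starRingEnd_self_apply,
      RingHom.id_apply]
    ring
  -- m is orthogonal to each W x, hence lies in each pair span
  have hmmem : ∀ (p q : Fin 3),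
      (∀ z : E9, (inner ℂ (ψ p) z : ℂ) = 0 → (inner ℂ (ψ q) z : ℂ) = 0 → bform φ z = 0) →
      m ∈ span ℂ ({ψ p, ψ q} : Set E9) := by
    intro p q hB
    rw [← Submodule.orthogonal_orthogonal (span ℂ ({ψ p, ψ q} : Set E9))]
    intro z hz
    have h1 : (inner ℂ (ψ p) z : ℂ) = 0 := hz (ψ p) (subset_span (by simp))
    have h2 : (inner ℂ (ψ q) z : ℂ) = 0 := hz (ψ q) (subset_span (by simp))
    rw [← inner_conj_symm, hm z, hB z h1 h2, map_zero]
  have hm12 := hmmem 1 2 s0.2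
  have hm02 := hmmem 0 2 s1.2
  have hm01 := hmmem 0 1 s2.2
  obtain ⟨a, b, hab⟩ := Submodule.mem_span_pair.1 hm12
  obtain ⟨c, d, hcd⟩ := Submodule.mem_span_pair.1 hm02
  obtain ⟨f, g, hfg⟩ := Submodule.mem_span_pair.1 hm01
  have e1 : c • ψ 0 + (-a) • ψ 1 + (d - b) • ψ 2 = 0 := by
    rw [show c • ψ 0 + (-a) • ψ 1 + (d - b) • ψ 2
        = (c • ψ 0 + d • ψ 2) - (a • ψ 1 + b • ψ 2) by module, hab, hcd, sub_self]
  have ha0 : a = 0 := by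
    have := hind c (-a) (d - b) e1
    simpa using this.2.1
  have e2 : f • ψ 0 + (g - a) • ψ 1 + (-b) • ψ 2 = 0 := by
    rw [show f • ψ 0 + (g - a) • ψ 1 + (-b) • ψ 2
        = (f • ψ 0 + g • ψ 1) - (a • ψ 1 + b • ψ 2) by module, hab, hfg, sub_self]
  have hb0 : b = 0 := by
    have := hind f (g - a) (-b) e2
    simpa using this.2.2
  have hm0 : m = 0 := by
    rw [← hab, ha0, hb0]
    simp
  -- conclude φ = 0, a contradiction
  apply hφ0
  ext p
  obtain ⟨i, j⟩ := p
  rw [PiLp.zero_apply]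
  have key : ∀ p : Fin 2 × Fin 2, m p = 0 := fun p => by rw [hm0]; rfl
  have k00 := key (1, 1)
  have k01 := key (1, 0)
  have k10 := key (0, 1)
  have k11 := key (0, 0)
  simp only [hmdef, PiLp.toLp_apply, Matrix.cons_val', Matrix.cons_val_zero, Matrix.cons_val_one,
    Matrix.head_cons, Matrix.empty_val', Matrix.cons_val_fin_one, Matrix.head_fin_const,
    map_neg, neg_eq_zero, map_eq_zero] at k00 k01 k10 k11
  fin_cases i <;> fin_cases j <;> assumption
end

section
/- Let ψ₁ = α₁·(e₀⊗e₀) + α₂·(e₁⊗e₁), ψ₂ = β₁·(e₀⊗e₀) + β₂·(e₁⊗e₁) with {ψ₁, ψ₂} linearly independent and all of α₁, α₂, β₁, β₂ nonzero, and let ψ₃ = e₀ ⊗ e₁. Then there is NO product vector φ = a ⊗ b with ⟨ψ₂, φ⟩ = 0, ⟨ψ₃, φ⟩ = 0, and ⟨ψ₁, φ⟩ ≠ 0. -/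
theorem stmt_10 (α₁ α₂ β₁ β₂ : ℂ) (hα₁ : α₁ ≠ 0) (hα₂ : α₂ ≠ 0)
    (hβ₁ : β₁ ≠ 0) (hβ₂ : β₂ ≠ 0)
    (ψ₁ ψ₂ ψ₃ : EuclideanSpace ℂ (Fin 2 × Fin 2))
    (hψ₁ : ψ₁ = α₁ • tens (e 0) (e 0) + α₂ • tens (e 1) (e 1))
    (hψ₂ : ψ₂ = β₁ • tens (e 0) (e 0) + β₂ • tens (e 1) (e 1))
    (hψ₃ : ψ₃ = tens (e 0) (e 1))
    (hli : LinearIndependent ℂ ![ψ₁, ψ₂]) :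
    ¬ ∃ (a b : EuclideanSpace ℂ (Fin 2)),
      (inner ℂ ψ₂ (tens a b) : ℂ) = 0 ∧ (inner ℂ ψ₃ (tens a b) : ℂ) = 0 ∧
      (inner ℂ ψ₁ (tens a b) : ℂ) ≠ 0 := by
  rintro ⟨a, b, h2, h3, h1⟩
  simp only [hψ₁, hψ₂, hψ₃, tens, e, PiLp.inner_apply, Fintype.sum_prod_type,
    Fin.sum_univ_two, PiLp.add_apply, PiLp.smul_apply, EuclideanSpace.single_apply,
    smul_eq_mul, map_mul, map_add, RingHom.map_one] at h1 h2 h3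
  simp only [Fin.isValue, if_true, if_false, show (0:Fin 2) ≠ 1 by decide,
    show (1:Fin 2) ≠ 0 by decide, mul_zero, zero_mul, mul_one, one_mul, add_zero,
    zero_add, if_neg, ite_mul, mul_ite] at h1 h2 h3
  simp only [RCLike.inner_apply, map_zero, zero_mul, map_one, one_mul, add_zero, mul_zero, mul_one,
    zero_add] at h1 h2 h3
  rcases mul_eq_zero.mp h3 with ha0 | hb1
  · have ha0' : a 0 = 0 := by
      simpa using congrArg (starRingEnd ℂ) ha0
    rw [ha0'] at h1 h2
    simp only [mul_zero, zero_mul, zero_add] at h1 h2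
    rcases mul_eq_zero.mp h2 with h | h
    · exact h1 (by rw [h, zero_mul])
    · exact hβ₂ (by simpa using congrArg (starRingEnd ℂ) h)
  · rw [hb1] at h1 h2
    simp only [mul_zero, zero_mul, add_zero] at h1 h2
    rcases mul_eq_zero.mp h2 with h | h
    · exact h1 (by rw [h, zero_mul])
    · exact hβ₁ (by simpa using congrArg (starRingEnd ℂ) h)
end

section
/- Let ψ₁ = α₁·(e₀⊗e₀) + α₂·(e₁⊗e₁), ψ₂ = β₁·(e₀⊗e₀) + β₂·(e₁⊗e₁) with {ψ₁, ψ₂} linearly independent and all coefficients nonzero, and ψ₃ = e₀ ⊗ e₁. Then there exists a product vector φ = a ⊗ b with ⟨ψ₁, φ⟩ = 0, ⟨ψ₂, φ⟩ = 0, and ⟨ψ₃, φ⟩ ≠ 0. -/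
theorem stmt_11 (α₁ α₂ β₁ β₂ : ℂ) (hα₁ : α₁ ≠ 0) (hα₂ : α₂ ≠ 0)
    (hβ₁ : β₁ ≠ 0) (hβ₂ : β₂ ≠ 0)
    (ψ₁ ψ₂ ψ₃ : EuclideanSpace ℂ (Fin 2 × Fin 2))
    (hψ₁ : ψ₁ = α₁ • tens (e 0) (e 0) + α₂ • tens (e 1) (e 1))
    (hψ₂ : ψ₂ = β₁ • tens (e 0) (e 0) + β₂ • tens (e 1) (e 1))
    (hψ₃ : ψ₃ = tens (e 0) (e 1))
    (hli : LinearIndependent ℂ ![ψ₁, ψ₂]) :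
    ∃ (a b : EuclideanSpace ℂ (Fin 2)),
      (inner ℂ ψ₁ (tens a b) : ℂ) = 0 ∧ (inner ℂ ψ₂ (tens a b) : ℂ) = 0 ∧
      (inner ℂ ψ₃ (tens a b) : ℂ) ≠ 0 := by
  subst hψ₁ hψ₂ hψ₃
  refine ⟨e 0, e 1, ?_, ?_, ?_⟩ <;>
    simp [PiLp.inner_apply, Fintype.sum_prod_type, Fin.sum_univ_two, tens, e,
      EuclideanSpace.single_apply, PiLp.add_apply, PiLp.smul_apply, smul_eq_mul]
  all_goals (intro h; have := congrFun h (0, 1); simp at this)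
end

section
/- Let a, b, c, d be nonzero complex numbers and set ψ₁ = a·(e₀⊗e₀) + b·(e₁⊗e₁), ψ₂ = c·(e₀⊗e₁) + d·(e₁⊗e₀) in ℂ² ⊗ ℂ². Let s be a complex square root of (ab)/(cd). Then ψ₁ + s·ψ₂ is a product vector, and ψ₁ − s·ψ₂ is a product vector. -/
lemma tens_apply {ι κ : Type*} [Fintype ι] [Fintype κ]
    (a : EuclideanSpace ℂ ι) (b : EuclideanSpace ℂ κ) (p : ι × κ) :
    tens a b p = a p.1 * b p.2 := rfl

lemma e_apply (i j : Fin 2) : e i j = if j = i then 1 else 0 := by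
  simp [e, EuclideanSpace.single_apply]

theorem stmt_13 (a b c d : ℂ) (ha : a ≠ 0) (hb : b ≠ 0) (hc : c ≠ 0) (hd : d ≠ 0)
    (ψ₁ ψ₂ : EuclideanSpace ℂ (Fin 2 × Fin 2))
    (hψ₁ : ψ₁ = a • tens (e 0) (e 0) + b • tens (e 1) (e 1))
    (hψ₂ : ψ₂ = c • tens (e 0) (e 1) + d • tens (e 1) (e 0))
    (s : ℂ) (hs : s ^ 2 = a * b / (c * d)) :
    (∃ u v : EuclideanSpace ℂ (Fin 2), ψ₁ + s • ψ₂ = tens u v) ∧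
    (∃ u v : EuclideanSpace ℂ (Fin 2), ψ₁ - s • ψ₂ = tens u v) := by
  have hcd : c * d ≠ 0 := mul_ne_zero hc hd
  have key : s * s * (c * d) = a * b := by
    have h := hs
    field_simp at h
    linear_combination h - (c * d) * sq s
  have key2 : s * d / a * (s * c) = b := by
    field_simp
    linear_combination key
  subst hψ₁ hψ₂
  constructor
  · refine ⟨WithLp.toLp 2 (fun i : Fin 2 => if i = 0 then 1 else s * d / a),
      WithLp.toLp 2 (fun j : Fin 2 => if j = 0 then a else s * c), ?_⟩
    ext p
    have hp : p = (0,0) ∨ p = (0,1) ∨ p = (1,0) ∨ p = (1,1) := by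
      rcases p with ⟨i, j⟩; fin_cases i <;> fin_cases j <;> simp
    rcases hp with h | h | h | h <;> subst h <;>
      simp only [PiLp.add_apply, PiLp.smul_apply, smul_eq_mul, tens_apply, e_apply] <;>
      norm_num <;> field_simp <;> (first | linear_combination key | linear_combination -key)
  · refine ⟨WithLp.toLp 2 (fun i : Fin 2 => if i = 0 then 1 else -(s * d) / a),
      WithLp.toLp 2 (fun j : Fin 2 => if j = 0 then a else -(s * c)), ?_⟩
    ext p
    have hp : p = (0,0) ∨ p = (0,1) ∨ p = (1,0) ∨ p = (1,1) := by
      rcases p with ⟨i, j⟩; fin_cases i <;> fin_cases j <;> simp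
    rcases hp with h | h | h | h <;> subst h <;>
      simp only [PiLp.sub_apply, PiLp.add_apply, PiLp.smul_apply, smul_eq_mul, tens_apply, e_apply] <;>
      norm_num <;> field_simp <;> (first | linear_combination key | linear_combination -key)
end
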